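/- Let γ be a translation-invariant Gibbsian specification on Ω = E^ℤ and φ_γ the associated potential. Then every S-invariant DLR-Gibbs measure μ ∈ G_S(γ) is weak Bowen-Gibbs with respect to φ_γ with constant P = P(φ_γ): there is a sequence C_n > 0 with (1/n) log C_n → 0 such that C_n^{-1} ≤ μ([ω_0^{n-1}]) / exp(S_nφ_γ(ω) − nP(φ_γ)) ≤ C_n for all n ∈ ℕ and ω ∈ Ω. -/

import Mathlib

open Filter Topology MeasureTheory

namespace GP

/-- The configuration space `Ω = E^ℤ`. -/
abbrev Conf (E : Type*) := ℤ → E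

variable {E : Type*}

/-- The shift by `i`: `(shiftZ i ω) k = ω (k + i)`.  The left shift `S` is `shiftZ 1`. -/
def shiftZ (i : ℤ) (ω : Conf E) : Conf E := fun k => ω (k + i)

/-- The cylinder set determined by a word `w ∈ E^n` (placed on coordinates `0,…,n-1`). -/
def cylW {n : ℕ} (w : Fin n → E) : Set (Conf E) := {ω | ∀ j : Fin n, ω ((j : ℕ) : ℤ) = w j}

/-- The cylinder set `[ω_0^{n-1}]`. -/
def cylPt (ω : Conf E) (n : ℕ) : Set (Conf E) :=
  {ω' | ∀ j : ℕ, j < n → ω' (j : ℤ) = ω (j : ℤ)}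

/-- Birkhoff sum `S_n φ = ∑_{k=0}^{n-1} φ ∘ S^k`. -/
def birk (φ : Conf E → ℝ) (n : ℕ) (ω : Conf E) : ℝ :=
  ∑ k ∈ Finset.range n, φ (shiftZ (k : ℤ) ω)

/-- Topological pressure of `φ` on the full shift:
`P(φ) = lim_n (1/n) log ∑_{w ∈ E^n} sup_{ω ∈ [w]} exp (S_n φ (ω))`
(the limit exists; we use `limsup` as the defining expression). -/
noncomputable def press [Fintype E] (φ : Conf E → ℝ) : ℝ :=
  Filter.limsup (fun n : ℕ =>
    Real.log (∑ w : Fin n → E, sSup ((fun ω => Real.exp (birk φ n ω)) '' cylW w)) / n) atTop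

/-- Kolmogorov–Sinai entropy of a shift-invariant measure on the full shift,
computed along the canonical generating partition into cylinders
(the limit exists; we use `limsup` as the defining expression). -/
noncomputable def ent [Fintype E] [MeasurableSpace E] (μ : Measure (Conf E)) : ℝ :=
  Filter.limsup (fun n : ℕ =>
    (- ∑ w : Fin n → E, ((μ (cylW w)).toReal * Real.log (μ (cylW w)).toReal)) / n) atTop

/-- Shift invariance of a measure. -/
def ShiftInv [MeasurableSpace E] (μ : Measure (Conf E)) : Prop :=
  Measure.map (shiftZ 1) μ = μ

/-- `μ` is an equilibrium state for `φ`: `μ` is a shift-invariant Borel probability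
measure with `h(μ) + ∫ φ dμ = P(φ)`. -/
def IsEquilibrium [Fintype E] [MeasurableSpace E] (φ : Conf E → ℝ)
    (μ : Measure (Conf E)) : Prop :=
  IsProbabilityMeasure μ ∧ ShiftInv μ ∧ ent μ + ∫ ω, φ ω ∂μ = press φ

/-- `ω^c`: the configuration equal to `c` at site `0` and to `ω` elsewhere. -/
def upd0 (ω : Conf E) (c : E) : Conf E := Function.update ω 0 c

/-- Partial sums `ρ_n(ξ,η) = ∑_{i=-n}^{n} (φ(S^i ξ) - φ(S^i η))`. -/
noncomputable def rhoN (φ : Conf E → ℝ) (ξ η : Conf E) (n : ℕ) : ℝ :=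
  ∑ i ∈ Finset.Icc (-(n : ℤ)) (n : ℤ), (φ (shiftZ i ξ) - φ (shiftZ i η))

/-- `φ` has the extensibility property: for all `a b ∈ E`, the functions
`ω ↦ ∑_{i=-n}^{n} (φ(S^i(ω^b)) - φ(S^i(ω^a)))` converge uniformly as `n → ∞`. -/
def Extensible (φ : Conf E → ℝ) : Prop :=
  ∀ a b : E, ∃ r : Conf E → ℝ,
    TendstoUniformly (fun n ω => rhoN φ (upd0 ω b) (upd0 ω a) n) r atTop

/-- The cocycle `ρ^φ(ξ,η) = lim_n ∑_{i=-n}^{n} (φ(S^i ξ) - φ(S^i η))`. -/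
noncomputable def rho (φ : Conf E → ℝ) (ξ η : Conf E) : ℝ :=
  limUnder atTop (rhoN φ ξ η)

/-- `ξ` and `η` differ in at most finitely many coordinates. -/
def FinDiff (ξ η : Conf E) : Prop := {k : ℤ | ξ k ≠ η k}.Finite

/-- `ovr Λ ξ ω` is the configuration `ξ_Λ ω_{ℤ∖Λ}`, equal to `ξ` on `Λ` and to `ω` off `Λ`. -/
def ovr (Λ : Finset ℤ) (ξ : {k // k ∈ Λ} → E) (ω : Conf E) : Conf E :=
  fun k => if h : k ∈ Λ then ξ ⟨k, h⟩ else ω k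

/-- `γ` is a specification: each `γ_Λ(·|ω_{Λ^c})` is a probability distribution on `E^Λ`,
and the family is consistent (`γ_Λ = γ_Λ ∘ γ_V` for `V ⊆ Λ`); here `γ Λ ω` denotes
`γ_Λ(ω_Λ | ω_{Λ^c})`. -/
def IsSpecification [Fintype E] (γ : Finset ℤ → Conf E → ℝ) : Prop :=
  (∀ (Λ : Finset ℤ) (ω : Conf E), 0 ≤ γ Λ ω) ∧
  (∀ (Λ : Finset ℤ) (ω : Conf E), ∑ ξ : {k // k ∈ Λ} → E, γ Λ (ovr Λ ξ ω) = 1) ∧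
  (∀ V Λ : Finset ℤ, V ⊆ Λ → ∀ ω : Conf E,
     γ Λ ω = (∑ η : {k // k ∈ V} → E, γ Λ (ovr V η ω)) * γ V ω)

/-- Non-nullness: `inf_ω γ_Λ(ω_Λ|ω_{Λ^c}) > 0` for every finite `Λ`. -/
def NonNull (γ : Finset ℤ → Conf E → ℝ) : Prop :=
  ∀ Λ : Finset ℤ, ∃ c > (0 : ℝ), ∀ ω : Conf E, c ≤ γ Λ ω

/-- Continuity (quasilocality): `ω ↦ γ_Λ(ω_Λ|ω_{Λ^c})` is continuous for every finite `Λ`. -/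
def ContSpec [TopologicalSpace E] (γ : Finset ℤ → Conf E → ℝ) : Prop :=
  ∀ Λ : Finset ℤ, Continuous (γ Λ)

/-- A Gibbsian specification: a non-null continuous specification. -/
def IsGibbsSpec [Fintype E] [TopologicalSpace E] (γ : Finset ℤ → Conf E → ℝ) : Prop :=
  IsSpecification γ ∧ NonNull γ ∧ ContSpec γ

/-- Translation invariance of a specification: `γ_{Λ+1} = γ_Λ ∘ S`. -/
def SpecTI (γ : Finset ℤ → Conf E → ℝ) : Prop :=
  ∀ (Λ : Finset ℤ) (ω : Conf E), γ (Λ.image (· + 1)) ω = γ Λ (shiftZ 1 ω)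

/-- `μ` is a DLR-Gibbs measure for the specification `γ`: `μ` is a Borel probability
measure satisfying the DLR equations `∫ γ_Λ(f|·) dμ = ∫ f dμ` for every finite `Λ`
and every continuous `f` (equivalently, each `γ_Λ` is a version of the conditional
probabilities of `μ`). -/
def IsDLRGibbs [Fintype E] [MeasurableSpace E] [TopologicalSpace E]
    (γ : Finset ℤ → Conf E → ℝ) (μ : Measure (Conf E)) : Prop :=
  IsProbabilityMeasure μ ∧
  ∀ (Λ : Finset ℤ) (f : Conf E → ℝ), Continuous f →
    ∫ ω, (∑ ξ : {k // k ∈ Λ} → E, γ Λ (ovr Λ ξ ω) * f (ovr Λ ξ ω)) ∂μ = ∫ ω, f ω ∂μ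

/-- The specification `γ^φ` associated with an extensible potential `φ`:
`γ^φ_Λ(ω_Λ|ω_{Λ^c}) = (∑_{ξ_Λ ∈ E^Λ} exp ρ^φ(ξ_Λ ω_{ℤ∖Λ}, ω))⁻¹`. -/
noncomputable def specOf [Fintype E] (φ : Conf E → ℝ) : Finset ℤ → Conf E → ℝ :=
  fun Λ ω => (∑ ξ : {k // k ∈ Λ} → E, Real.exp (rho φ (ovr Λ ξ ω) ω))⁻¹

/-- The configuration `𝐚_{-∞}^{-1} b ω_1^{∞}`: equal to `a` at all negative
coordinates, to `b` at coordinate `0`, and to `ω` at positive coordinates. -/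
def bca (a : E) (ω : Conf E) (b : E) : Conf E :=
  fun k => if k < 0 then a else if k = 0 then b else ω k

/-- The potential associated with a specification:
`φ_γ(ω) = log (γ_{{0}}(ω_0 | 𝐚_{-∞}^{-1} ω_1^{∞}) / γ_{{0}}(a | 𝐚_{-∞}^{-1} ω_1^{∞}))`. -/
noncomputable def phiOf (γ : Finset ℤ → Conf E → ℝ) (a : E) (ω : Conf E) : ℝ :=
  Real.log (γ ({0} : Finset ℤ) (bca a ω (ω 0)) / γ ({0} : Finset ℤ) (bca a ω a))

/-- `μ` is weak Bowen-Gibbs for `φ` with constant `P`. -/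
def WeakBowenGibbs [MeasurableSpace E] (μ : Measure (Conf E)) (φ : Conf E → ℝ)
    (P : ℝ) : Prop :=
  ∃ C : ℕ → ℝ, (∀ n, 0 < C n) ∧
    Tendsto (fun n : ℕ => Real.log (C n) / n) atTop (𝓝 0) ∧
    ∀ (n : ℕ) (ω : Conf E),
      (C n)⁻¹ ≤ (μ (cylPt ω n)).toReal / Real.exp (birk φ n ω - n * P) ∧
      (μ (cylPt ω n)).toReal / Real.exp (birk φ n ω - n * P) ≤ C n


/-! ### Auxiliary material for Statement 15 -/

section Aux15
set_option linter.unusedSectionVars false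

lemma shiftZ_shiftZ (i j : ℤ) (ω : Conf E) : shiftZ i (shiftZ j ω) = shiftZ (j + i) ω := by
  funext k
  show ω (k + i + j) = ω (k + (j + i))
  congr 1; ring

lemma shiftZ_zero (ω : Conf E) : shiftZ 0 ω = ω := by
  funext k; show ω (k + 0) = ω k; rw [add_zero]

section Spec

variable [Fintype E] {γ : Finset ℤ → Conf E → ℝ}

lemma ovr_word (Λ : Finset ℤ) (ω : Conf E) : ovr Λ (fun s => ω s.1) ω = ω := by
  funext k
  by_cases h : k ∈ Λ <;> simp [ovr, h]

lemma gamma_pos (hNN : NonNull γ) (Λ : Finset ℤ) (ω : Conf E) : 0 < γ Λ ω := by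
  obtain ⟨c, hc, h⟩ := hNN Λ
  exact lt_of_lt_of_le hc (h ω)

lemma gamma_le_one (hS : IsSpecification γ) (Λ : Finset ℤ) (ω : Conf E) : γ Λ ω ≤ 1 := by
  have h := hS.2.1 Λ ω
  calc γ Λ ω = γ Λ (ovr Λ (fun s : {k // k ∈ Λ} => ω s.1) ω) := by rw [ovr_word]
    _ ≤ ∑ ξ : {k // k ∈ Λ} → E, γ Λ (ovr Λ ξ ω) :=
        Finset.single_le_sum (f := fun ξ : {k // k ∈ Λ} → E => γ Λ (ovr Λ ξ ω))
          (fun ξ _ => hS.1 Λ _) (Finset.mem_univ (fun s : {k // k ∈ Λ} => ω s.1))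
    _ = 1 := h

lemma gamma_singleton_shift (hTI : SpecTI γ) (k : ℕ) (ω : Conf E) :
    γ ({(k : ℤ)} : Finset ℤ) ω = γ ({0} : Finset ℤ) (shiftZ (k : ℤ) ω) := by
  induction k generalizing ω with
  | zero => simp [shiftZ_zero]
  | succ k ih =>
    have h1 : (({(k : ℤ)} : Finset ℤ).image (· + 1)) = ({((k + 1 : ℕ) : ℤ)} : Finset ℤ) := by
      rw [Finset.image_singleton]; push_cast; ring_nf
    have := hTI ({(k : ℤ)} : Finset ℤ) ω
    rw [h1] at this
    rw [this, ih, shiftZ_shiftZ]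
    congr 1
    push_cast; ring

/-- Key consequence of consistency: if `ω` and `ω'` agree off `V ⊆ Λ`, then
`γ Λ ω * γ V ω' = γ Λ ω' * γ V ω`. -/
lemma gamma_ratio (hS : IsSpecification γ) {V Λ : Finset ℤ} (hVΛ : V ⊆ Λ)
    {ω ω' : Conf E} (hagree : ∀ k, k ∉ V → ω k = ω' k) :
    γ Λ ω * γ V ω' = γ Λ ω' * γ V ω := by
  have h1 := hS.2.2 V Λ hVΛ ω
  have h2 := hS.2.2 V Λ hVΛ ω'
  have hsame : ∀ η : {k // k ∈ V} → E, ovr V η ω = ovr V η ω' := by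
    intro η; funext k
    by_cases h : k ∈ V
    · simp [ovr, h]
    · simp [ovr, h, hagree k h]
  have hsum : (∑ η : {k // k ∈ V} → E, γ Λ (ovr V η ω))
      = ∑ η : {k // k ∈ V} → E, γ Λ (ovr V η ω') := by
    refine Finset.sum_congr rfl fun η _ => ?_
    rw [hsame η]
  rw [h1, h2, hsum]; ring

end Spec

section MeasTop

variable [Fintype E] [TopologicalSpace E] [DiscreteTopology E]
  [MeasurableSpace E] [MeasurableSingletonClass E]

lemma borelE : BorelSpace E := by
  constructor
  refine le_antisymm ?_ ?_
  · intro s _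
    exact MeasurableSpace.measurableSet_generateFrom (isOpen_discrete s)
  · refine MeasurableSpace.generateFrom_le fun t _ => ?_
    exact (Set.toFinite t).measurableSet

lemma measurableSet_cylPt (ω : Conf E) (n : ℕ) : MeasurableSet (cylPt ω n) := by
  have : cylPt ω n = ⋂ j : Fin n, (fun ω' : Conf E => ω' ((j : ℕ) : ℤ)) ⁻¹' {ω ((j : ℕ) : ℤ)} := by
    ext x
    simp only [cylPt, Set.mem_setOf_eq, Set.mem_iInter, Set.mem_preimage, Set.mem_singleton_iff]
    constructor
    · intro h j; exact h j j.2
    · intro h j hj; exact h ⟨j, hj⟩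
  rw [this]
  exact MeasurableSet.iInter fun j =>
    (measurable_pi_apply _) (measurableSet_singleton _)

lemma isClopen_cylPt (ω : Conf E) (n : ℕ) : IsClopen (cylPt ω n) := by
  have : cylPt ω n = ⋂ j : Fin n, (fun ω' : Conf E => ω' ((j : ℕ) : ℤ)) ⁻¹' {ω ((j : ℕ) : ℤ)} := by
    ext x
    simp only [cylPt, Set.mem_setOf_eq, Set.mem_iInter, Set.mem_preimage, Set.mem_singleton_iff]
    constructor
    · intro h j; exact h j j.2
    · intro h j hj; exact h ⟨j, hj⟩
  rw [this]
  constructor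
  · exact isClosed_iInter fun j => (isClopen_discrete _).1.preimage (continuous_apply _)
  · exact isOpen_iInter_of_finite fun j => (isClopen_discrete _).2.preimage (continuous_apply _)

lemma continuous_cyl_indicator (ω : Conf E) (n : ℕ) :
    Continuous (Set.indicator (cylPt ω n) (fun _ => (1 : ℝ))) := by
  classical
  refine IsLocallyConstant.continuous ?_
  refine IsLocallyConstant.iff_isOpen_fiber.2 fun y => ?_
  have hcl := isClopen_cylPt ω n
  by_cases h1 : y = 1
  · have : (Set.indicator (cylPt ω n) (fun _ => (1 : ℝ))) ⁻¹' {y} = cylPt ω n := by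
      ext x; by_cases hx : x ∈ cylPt ω n <;> simp [Set.indicator_apply, hx, h1]
    rw [this]; exact hcl.2
  · by_cases h0 : y = 0
    · have : (Set.indicator (cylPt ω n) (fun _ => (1 : ℝ))) ⁻¹' {y} = (cylPt ω n)ᶜ := by
        ext x; by_cases hx : x ∈ cylPt ω n <;> simp [Set.indicator_apply, hx, h1, h0]
      rw [this]; exact hcl.1.isOpen_compl
    · have : (Set.indicator (cylPt ω n) (fun _ => (1 : ℝ))) ⁻¹' {y} = ∅ := by
        ext x; by_cases hx : x ∈ cylPt ω n <;> simp [Set.indicator_apply, hx, Ne.symm h1, Ne.symm h0]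
      rw [this]; exact isOpen_empty

lemma continuous_ovr (Λ : Finset ℤ) (ξ : {k // k ∈ Λ} → E) :
    Continuous (fun η : Conf E => ovr Λ ξ η) := by
  refine continuous_pi fun k => ?_
  by_cases h : k ∈ Λ
  · simpa [ovr, h] using continuous_const
  · simpa [ovr, h] using continuous_apply k

/-- The DLR equation applied to the indicator of a cylinder. -/
lemma measure_cylPt_eq_integral {γ : Finset ℤ → Conf E → ℝ}
    (hC : ContSpec γ) {μ : Measure (Conf E)} (hμ : IsDLRGibbs γ μ)
    (ω : Conf E) (n : ℕ) (Λ : Finset ℤ) (hΛ : ∀ k : ℤ, k ∈ Λ ↔ 0 ≤ k ∧ k < (n : ℤ)) :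
    ∫ η, γ Λ (ovr Λ (fun s => ω s.1) η) ∂μ = (μ (cylPt ω n)).toReal := by
  classical
  set f : Conf E → ℝ := Set.indicator (cylPt ω n) (fun _ => (1 : ℝ)) with hf
  have hfc : Continuous f := continuous_cyl_indicator ω n
  have key := hμ.2 Λ f hfc
  have hint : ∀ η : Conf E,
      (∑ ξ : {k // k ∈ Λ} → E, γ Λ (ovr Λ ξ η) * f (ovr Λ ξ η))
        = γ Λ (ovr Λ (fun s => ω s.1) η) := by
    intro η
    rw [Finset.sum_eq_single (fun s => ω s.1)]
    · have hmem : ovr Λ (fun s => ω s.1) η ∈ cylPt ω n := by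
        intro j hj
        have hjΛ : (j : ℤ) ∈ Λ := (hΛ _).2 ⟨Int.ofNat_nonneg j, by exact_mod_cast hj⟩
        simp [ovr, hjΛ]
      simp [f, Set.indicator_of_mem hmem]
    · intro ξ _ hne
      have : ovr Λ ξ η ∉ cylPt ω n := by
        intro hmem
        apply hne
        funext s
        have h0 : 0 ≤ s.1 ∧ s.1 < (n : ℤ) := (hΛ s.1).1 s.2
        have := hmem s.1.toNat (by omega)
        have hs : ((s.1.toNat : ℕ) : ℤ) = s.1 := Int.toNat_of_nonneg h0.1
        rw [hs] at this
        have : ovr Λ ξ η s.1 = ω s.1 := this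
        simpa [ovr, s.2] using this
      simp [f, Set.indicator_of_notMem this]
    · intro h; exact absurd (Finset.mem_univ _) h
  rw [show (∫ η, (∑ ξ : {k // k ∈ Λ} → E, γ Λ (ovr Λ ξ η) * f (ovr Λ ξ η)) ∂μ)
      = ∫ η, γ Λ (ovr Λ (fun s => ω s.1) η) ∂μ from by
    congr 1; funext η; exact hint η] at key
  rw [key]
  exact integral_indicator_one (measurableSet_cylPt ω n)

end MeasTop

section Window

variable [Fintype E] [TopologicalSpace E] [DiscreteTopology E]

lemma exists_window (g : Conf E → ℝ) (hg : Continuous g) {ε : ℝ} (hε : 0 < ε) :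
    ∃ m : ℕ, ∀ ω ω' : Conf E, (∀ k : ℤ, |k| ≤ (m : ℤ) → ω k = ω' k) → |g ω - g ω'| ≤ ε := by
  classical
  have hU : ∀ x : Conf E, IsOpen (g ⁻¹' Metric.ball (g x) (ε / 2)) :=
    fun x => Metric.isOpen_ball.preimage hg
  -- for each x choose a finite window determining membership in U x
  have hbasis : ∀ x : Conf E, ∃ I : Finset ℤ,
      {y : Conf E | ∀ i ∈ I, y i = x i} ⊆ g ⁻¹' Metric.ball (g x) (ε / 2) := by
    intro x
    have hx : x ∈ g ⁻¹' Metric.ball (g x) (ε / 2) := by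
      simp [Metric.mem_ball, hε]
    rcases (isOpen_pi_iff.1 (hU x)) x hx with ⟨I, u, hIu, hsub⟩
    refine ⟨I, fun y hy => hsub ?_⟩
    intro i hi
    rw [hy i hi]
    exact (hIu i hi).2
  choose I hI using hbasis
  set V : Conf E → Set (Conf E) := fun x => {y : Conf E | ∀ i ∈ I x, y i = x i} with hV
  have hVopen : ∀ x, IsOpen (V x) := by
    intro x
    have : V x = ⋂ i ∈ (I x : Set ℤ), (fun y : Conf E => y i) ⁻¹' {x i} := by
      ext y; simp [hV, Set.mem_iInter]
    rw [this]
    exact (I x).finite_toSet.isOpen_biInter fun i _ =>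
      (isClopen_discrete _).2.preimage (continuous_apply i)
  have hcover : (Set.univ : Set (Conf E)) ⊆ ⋃ x : Conf E, V x := by
    intro y _
    exact Set.mem_iUnion.2 ⟨y, fun i _ => rfl⟩
  obtain ⟨t, ht⟩ := isCompact_univ.elim_finite_subcover V hVopen hcover
  refine ⟨t.sup fun x => (I x).sup fun i => i.natAbs, fun ω ω' hagree => ?_⟩
  obtain ⟨x, hxt, hωx⟩ : ∃ x ∈ t, ω ∈ V x := by
    have := ht (Set.mem_univ ω)
    simpa using this
  have hωx' : ω' ∈ V x := by
    intro i hi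
    have hile : i.natAbs ≤ t.sup fun x => (I x).sup fun i => i.natAbs :=
      le_trans (Finset.le_sup (f := fun i : ℤ => i.natAbs) hi)
        (Finset.le_sup (f := fun x => (I x).sup fun i => i.natAbs) hxt)
    have : |i| ≤ ((t.sup fun x => (I x).sup fun i => i.natAbs : ℕ) : ℤ) := by
      rw [Int.abs_eq_natAbs]; exact_mod_cast hile
    rw [← hagree i this]
    exact hωx i hi
  have h1 : |g ω - g x| < ε / 2 := by
    have := hI x hωx; simpa [Real.dist_eq] using this
  have h2 : |g ω' - g x| < ε / 2 := by
    have := hI x hωx'; simpa [Real.dist_eq] using this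
  calc |g ω - g ω'| ≤ |g ω - g x| + |g ω' - g x| := by
        rw [abs_sub_comm (g ω') (g x)]; exact abs_sub_le _ _ _
    _ ≤ ε := by linarith

end Window

section Var

variable [Nonempty E]

/-- The oscillation of `g` over pairs of configurations agreeing on the window `[-m, m]`. -/
noncomputable def vvar (g : Conf E → ℝ) (m : ℕ) : ℝ :=
  sSup ((fun p : Conf E × Conf E => |g p.1 - g p.2|) ''
    {p | ∀ k : ℤ, |k| ≤ (m : ℤ) → p.1 k = p.2 k})

lemma vvar_bddAbove {g : Conf E → ℝ} {B : ℝ} (hB : ∀ ω, |g ω| ≤ B) (m : ℕ) :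
    BddAbove ((fun p : Conf E × Conf E => |g p.1 - g p.2|) ''
      {p | ∀ k : ℤ, |k| ≤ (m : ℤ) → p.1 k = p.2 k}) := by
  refine ⟨2 * B, ?_⟩
  rintro x ⟨p, _, rfl⟩
  have := hB p.1; have := hB p.2
  have := abs_sub (g p.1) (g p.2)
  calc |g p.1 - g p.2| ≤ |g p.1| + |g p.2| := abs_sub _ _
    _ ≤ 2 * B := by linarith [hB p.1, hB p.2]

lemma le_vvar {g : Conf E → ℝ} {B : ℝ} (hB : ∀ ω, |g ω| ≤ B) (m : ℕ)
    {ω ω' : Conf E} (h : ∀ k : ℤ, |k| ≤ (m : ℤ) → ω k = ω' k) :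
    |g ω - g ω'| ≤ vvar g m :=
  le_csSup (vvar_bddAbove hB m) ⟨(ω, ω'), h, rfl⟩

lemma vvar_nonneg {g : Conf E → ℝ} {B : ℝ} (hB : ∀ ω, |g ω| ≤ B) (m : ℕ) :
    0 ≤ vvar g m := by
  obtain ⟨x⟩ : Nonempty (Conf E) := inferInstance
  have := le_vvar hB m (ω := x) (ω' := x) (fun _ _ => rfl)
  simpa using this

lemma vvar_tendsto [Fintype E] [TopologicalSpace E] [DiscreteTopology E]
    {g : Conf E → ℝ} {B : ℝ} (hB : ∀ ω, |g ω| ≤ B) (hg : Continuous g) :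
    Tendsto (vvar g) atTop (𝓝 0) := by
  rw [Metric.tendsto_atTop]
  intro ε hε
  obtain ⟨m0, hm0⟩ := exists_window g hg (half_pos hε)
  refine ⟨m0, fun m hm => ?_⟩
  have hle : vvar g m ≤ ε / 2 := by
    refine csSup_le ?_ ?_
    · obtain ⟨x⟩ : Nonempty (Conf E) := inferInstance
      exact ⟨_, ⟨(x, x), fun _ _ => rfl, rfl⟩⟩
    · rintro r ⟨p, hp, rfl⟩
      exact hm0 p.1 p.2 fun k hk => hp k (le_trans hk (by exact_mod_cast hm))
  have h0 : 0 ≤ vvar g m := vvar_nonneg hB m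
  rw [Real.dist_eq]
  rw [abs_of_nonneg (by simpa using h0)]
  simp only [sub_zero]
  linarith

end Var

section Press

variable [Fintype E] [Nonempty E]

/-- The configuration equal to the word `w` on `[0,n)` and to `a` elsewhere. -/
def wordCfg (a : E) {n : ℕ} (w : Fin n → E) : Conf E :=
  fun k => if h : 0 ≤ k ∧ k < (n : ℤ) then w ⟨k.toNat, by omega⟩ else a

lemma wordCfg_mem_cylW (a : E) {n : ℕ} (w : Fin n → E) : wordCfg a w ∈ cylW w := by
  intro j
  have h : (0 : ℤ) ≤ ((j : ℕ) : ℤ) ∧ ((j : ℕ) : ℤ) < (n : ℤ) := by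
    constructor
    · exact Int.ofNat_nonneg _
    · exact_mod_cast j.2
  simp only [wordCfg, dif_pos h]
  congr 1

/-- Partition function numerator: `log` of it is the sequence in the pressure. -/
noncomputable def tW (φ : Conf E → ℝ) {n : ℕ} (w : Fin n → E) : ℝ :=
  sSup ((fun ω => Real.exp (birk φ n ω)) '' cylW w)

lemma useq_eq_press (φ : Conf E → ℝ) :
    press φ = Filter.limsup
      (fun n : ℕ => Real.log (∑ w : Fin n → E, tW φ w) / n) atTop := rfl

lemma birk_abs_le {φ : Conf E → ℝ} {M : ℝ} (hM : ∀ ω, |φ ω| ≤ M) (n : ℕ) (ω : Conf E) :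
    |birk φ n ω| ≤ n * M := by
  calc |birk φ n ω| ≤ ∑ k ∈ Finset.range n, |φ (shiftZ (k : ℤ) ω)| :=
        Finset.abs_sum_le_sum_abs _ _
    _ ≤ ∑ _k ∈ Finset.range n, M := Finset.sum_le_sum fun k _ => hM _
    _ = n * M := by simp [mul_comm]

lemma tW_bddAbove {φ : Conf E → ℝ} {M : ℝ} (hM : ∀ ω, |φ ω| ≤ M) {n : ℕ} (w : Fin n → E) :
    BddAbove ((fun ω => Real.exp (birk φ n ω)) '' cylW w) := by
  refine ⟨Real.exp (n * M), ?_⟩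
  rintro x ⟨ω, _, rfl⟩
  exact Real.exp_le_exp.2 (le_trans (le_abs_self _) (birk_abs_le hM n ω))

lemma le_tW {φ : Conf E → ℝ} {M : ℝ} (hM : ∀ ω, |φ ω| ≤ M) {n : ℕ} {w : Fin n → E}
    {ω : Conf E} (hω : ω ∈ cylW w) : Real.exp (birk φ n ω) ≤ tW φ w :=
  le_csSup (tW_bddAbove hM w) ⟨ω, hω, rfl⟩

lemma tW_pos (a : E) {φ : Conf E → ℝ} {M : ℝ} (hM : ∀ ω, |φ ω| ≤ M) {n : ℕ} (w : Fin n → E) :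
    0 < tW φ w :=
  lt_of_lt_of_le (Real.exp_pos _) (le_tW hM (wordCfg_mem_cylW a w))

lemma tW_le {φ : Conf E → ℝ} {M : ℝ} (hM : ∀ ω, |φ ω| ≤ M) {n : ℕ} (w : Fin n → E)
    {c : ℝ} (hc : ∀ ω ∈ cylW w, Real.exp (birk φ n ω) ≤ c) : tW φ w ≤ c :=
  csSup_le ((Set.nonempty_of_mem (wordCfg_mem_cylW (Classical.arbitrary E) w)).image _)
    (by rintro x ⟨ω, hω, rfl⟩; exact hc ω hω)

lemma Zseq_pos (a : E) {φ : Conf E → ℝ} {M : ℝ} (hM : ∀ ω, |φ ω| ≤ M) (n : ℕ) :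
    0 < ∑ w : Fin n → E, tW φ w :=
  Finset.sum_pos (fun w _ => tW_pos a hM w) Finset.univ_nonempty

lemma birk_add (φ : Conf E → ℝ) (m n : ℕ) (ω : Conf E) :
    birk φ (m + n) ω = birk φ m ω + birk φ n (shiftZ (m : ℤ) ω) := by
  unfold birk
  rw [Finset.sum_range_add]
  congr 1
  refine Finset.sum_congr rfl fun i _ => ?_
  rw [shiftZ_shiftZ]
  congr 2

lemma useq_subadditive {φ : Conf E → ℝ} {M : ℝ} (hM : ∀ ω, |φ ω| ≤ M) :
    Subadditive (fun n => Real.log (∑ w : Fin n → E, tW φ w)) := by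
  intro m n
  classical
  set a := Classical.arbitrary E
  have key : ∀ w : Fin (m + n) → E,
      tW φ w ≤ tW φ (fun j => w (Fin.castAdd n j)) * tW φ (fun j => w (Fin.natAdd m j)) := by
    intro w
    refine tW_le hM w ?_
    intro ω hω
    have hsplit := birk_add φ m n ω
    have h1 : ω ∈ cylW (fun j => w (Fin.castAdd n j)) := by
      intro j
      have := hω (Fin.castAdd n j)
      simpa using this
    have h2 : shiftZ (m : ℤ) ω ∈ cylW (fun j => w (Fin.natAdd m j)) := by
      intro j
      have := hω (Fin.natAdd m j)
      show (shiftZ (m : ℤ) ω) ((j : ℕ) : ℤ) = _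
      show ω (((j : ℕ) : ℤ) + (m : ℤ)) = _
      have harg : (((j : ℕ) : ℤ) + (m : ℤ)) = (((Fin.natAdd m j : Fin (m + n)) : ℕ) : ℤ) := by
        simp [Fin.natAdd]; push_cast; ring
      rw [harg]
      exact this
    rw [hsplit, Real.exp_add]
    have e1 : Real.exp (birk φ m ω) ≤ tW φ (fun j => w (Fin.castAdd n j)) := le_tW hM h1
    have e2 : Real.exp (birk φ n (shiftZ (m : ℤ) ω)) ≤ tW φ (fun j => w (Fin.natAdd m j)) :=
      le_tW hM h2
    exact mul_le_mul e1 e2 (Real.exp_pos _).le (le_of_lt (tW_pos a hM _))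
  have hsum : (∑ w : Fin (m + n) → E, tW φ w)
      ≤ (∑ u : Fin m → E, tW φ u) * (∑ v : Fin n → E, tW φ v) := by
    set e : ((Fin m → E) × (Fin n → E)) ≃ (Fin (m + n) → E) :=
      (Equiv.sumArrowEquivProdArrow (Fin m) (Fin n) E).symm.trans
        (Equiv.arrowCongr finSumFinEquiv (Equiv.refl E)) with he
    have hsum1 : (∑ w : Fin (m + n) → E, tW φ w) = ∑ p : (Fin m → E) × (Fin n → E), tW φ (e p) :=
      (Equiv.sum_comp e (tW φ)).symm
    have hterm : ∀ p : (Fin m → E) × (Fin n → E), tW φ (e p) ≤ tW φ p.1 * tW φ p.2 := by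
      intro p
      have h1 : (fun j => (e p) (Fin.castAdd n j)) = p.1 := by
        funext j
        simp [he, Equiv.arrowCongr, Equiv.sumArrowEquivProdArrow,
          finSumFinEquiv_symm_apply_castAdd]
      have h2 : (fun j => (e p) (Fin.natAdd m j)) = p.2 := by
        funext j
        simp [he, Equiv.arrowCongr, Equiv.sumArrowEquivProdArrow,
          finSumFinEquiv_symm_apply_natAdd]
      have := key (e p)
      rwa [h1, h2] at this
    calc (∑ w : Fin (m + n) → E, tW φ w) = ∑ p : (Fin m → E) × (Fin n → E), tW φ (e p) := hsum1
      _ ≤ ∑ p : (Fin m → E) × (Fin n → E), tW φ p.1 * tW φ p.2 :=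
          Finset.sum_le_sum fun p _ => hterm p
      _ = (∑ u : Fin m → E, tW φ u) * (∑ v : Fin n → E, tW φ v) := by
          rw [Finset.sum_mul_sum, Fintype.sum_prod_type]
  calc Real.log (∑ w : Fin (m + n) → E, tW φ w)
      ≤ Real.log ((∑ u : Fin m → E, tW φ u) * (∑ v : Fin n → E, tW φ v)) :=
        Real.log_le_log (Zseq_pos a hM (m + n)) hsum
    _ = _ := Real.log_mul (ne_of_gt (Zseq_pos a hM m)) (ne_of_gt (Zseq_pos a hM n))

lemma useq_div_bddBelow {φ : Conf E → ℝ} {M : ℝ} (hM : ∀ ω, |φ ω| ≤ M) :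
    BddBelow (Set.range fun n : ℕ => Real.log (∑ w : Fin n → E, tW φ w) / n) := by
  have hM0 : 0 ≤ M := le_trans (abs_nonneg _) (hM (fun _ => Classical.arbitrary E))
  refine ⟨-M, ?_⟩
  rintro x ⟨n, rfl⟩
  rcases Nat.eq_zero_or_pos n with hn | hn
  · subst hn; simp; linarith
  · have hlb : Real.exp (-(n * M)) ≤ ∑ w : Fin n → E, tW φ w := by
      have hw : ∀ w : Fin n → E, Real.exp (-(n * M)) ≤ tW φ w := by
        intro w
        refine le_trans ?_ (le_tW hM (wordCfg_mem_cylW (Classical.arbitrary E) w))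
        refine Real.exp_le_exp.2 ?_
        have := birk_abs_le hM n (wordCfg (Classical.arbitrary E) w)
        rw [abs_le] at this
        linarith [this.1]
      calc Real.exp (-(n * M)) ≤ tW φ (fun _ => Classical.arbitrary E) := hw _
        _ ≤ ∑ w : Fin n → E, tW φ w :=
            Finset.single_le_sum (fun w _ => (tW_pos (Classical.arbitrary E) hM w).le)
              (Finset.mem_univ _)
    have hlog : -(n * M) ≤ Real.log (∑ w : Fin n → E, tW φ w) := by
      have := Real.log_le_log (Real.exp_pos _) hlb
      rwa [Real.log_exp] at this
    rw [le_div_iff₀ (by exact_mod_cast hn : (0:ℝ) < n)]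
    nlinarith [hlog]

lemma useq_tendsto_press {φ : Conf E → ℝ} {M : ℝ} (hM : ∀ ω, |φ ω| ≤ M) :
    Tendsto (fun n : ℕ => Real.log (∑ w : Fin n → E, tW φ w) / n) atTop (𝓝 (press φ)) := by
  have hsub := useq_subadditive hM
  have hb := useq_div_bddBelow hM
  have ht := hsub.tendsto_lim hb
  have h2 : press φ = hsub.lim := ht.limsup_eq
  rw [h2]
  exact ht

end Press

section Core

/-- `log γ_{{0}}`. -/
noncomputable def gfun (γ : Finset ℤ → Conf E → ℝ) : Conf E → ℝ :=
  fun ω => Real.log (γ ({0} : Finset ℤ) ω)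

/-- The window `{0, …, n-1}` as a finset of `ℤ`. -/
noncomputable def Lam (n : ℕ) : Finset ℤ := Finset.Icc 0 ((n : ℤ) - 1)

lemma mem_Lam {n : ℕ} {k : ℤ} : k ∈ Lam n ↔ 0 ≤ k ∧ k < (n : ℤ) := by
  simp only [Lam, Finset.mem_Icc]
  omega

/-- Interpolating configuration: `a` on `[0, t) ∩ [0,n)`, `ζ` on `[t, n)`, `η` outside. -/
noncomputable def interpC (a : E) (n : ℕ) (ζ : {k // k ∈ Lam n} → E) (η : Conf E) (t : ℤ) :
    Conf E :=
  fun j => if h : j ∈ Lam n then (if j < t then a else ζ ⟨j, h⟩) else η j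

variable [Fintype E] [Nonempty E] {γ : Finset ℤ → Conf E → ℝ}

lemma abs_g_le (hS : IsSpecification γ) (hNN : NonNull γ) :
    ∃ B : ℝ, 0 ≤ B ∧ ∀ ω : Conf E, |gfun γ ω| ≤ B := by
  obtain ⟨c, hc, hcle⟩ := hNN ({0} : Finset ℤ)
  have hc1 : c ≤ 1 := le_trans (hcle (fun _ => Classical.arbitrary E))
    (gamma_le_one hS _ _)
  refine ⟨-Real.log c, ?_, ?_⟩
  · simpa using Real.log_nonpos hc.le hc1
  · intro ω
    have h1 : γ ({0} : Finset ℤ) ω ≤ 1 := gamma_le_one hS _ _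
    have h2 : Real.log (γ ({0} : Finset ℤ) ω) ≤ 0 :=
      Real.log_nonpos (gamma_pos hNN _ _).le h1
    have h3 : Real.log c ≤ Real.log (γ ({0} : Finset ℤ) ω) :=
      Real.log_le_log hc (hcle ω)
    rw [abs_le]
    simp only [gfun]
    constructor <;> [linarith; linarith]

lemma phi_eq (hNN : NonNull γ) (a : E) (ω : Conf E) :
    phiOf γ a ω = gfun γ (bca a ω (ω 0)) - gfun γ (bca a ω a) := by
  unfold phiOf gfun
  exact Real.log_div (ne_of_gt (gamma_pos hNN _ _)) (ne_of_gt (gamma_pos hNN _ _))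

lemma abs_phi_le (hNN : NonNull γ) {B : ℝ} (hB : ∀ ω : Conf E, |gfun γ ω| ≤ B) (a : E)
    (ω : Conf E) : |phiOf γ a ω| ≤ 2 * B := by
  rw [phi_eq hNN]
  calc |gfun γ (bca a ω (ω 0)) - gfun γ (bca a ω a)|
      ≤ |gfun γ (bca a ω (ω 0))| + |gfun γ (bca a ω a)| := abs_sub _ _
    _ ≤ 2 * B := by linarith [hB (bca a ω (ω 0)), hB (bca a ω a)]

lemma phi_window (hNN : NonNull γ) {B : ℝ} (hB : ∀ ω : Conf E, |gfun γ ω| ≤ B) (a : E)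
    (m : ℕ) {ω ω' : Conf E} (h : ∀ j : ℤ, 0 ≤ j → j ≤ (m : ℤ) → ω j = ω' j) :
    |phiOf γ a ω - phiOf γ a ω'| ≤ 2 * vvar (gfun γ) m := by
  rw [phi_eq hNN, phi_eq hNN]
  have h1 : |gfun γ (bca a ω (ω 0)) - gfun γ (bca a ω' (ω' 0))| ≤ vvar (gfun γ) m := by
    refine le_vvar hB m ?_
    intro k hk
    rw [abs_le] at hk
    show (if k < 0 then a else if k = 0 then ω 0 else ω k)
      = (if k < 0 then a else if k = 0 then ω' 0 else ω' k)
    split_ifs with h1 h2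
    · rfl
    · exact h 0 le_rfl (by omega)
    · exact h k (by omega) (by omega)
  have h2 : |gfun γ (bca a ω a) - gfun γ (bca a ω' a)| ≤ vvar (gfun γ) m := by
    refine le_vvar hB m ?_
    intro k hk
    rw [abs_le] at hk
    show (if k < 0 then a else if k = 0 then a else ω k)
      = (if k < 0 then a else if k = 0 then a else ω' k)
    split_ifs with h1 h2
    · rfl
    · rfl
    · exact h k (by omega) (by omega)
  calc |gfun γ (bca a ω (ω 0)) - gfun γ (bca a ω a)
        - (gfun γ (bca a ω' (ω' 0)) - gfun γ (bca a ω' a))|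
      = |(gfun γ (bca a ω (ω 0)) - gfun γ (bca a ω' (ω' 0)))
        - (gfun γ (bca a ω a) - gfun γ (bca a ω' a))| := by ring_nf
    _ ≤ |gfun γ (bca a ω (ω 0)) - gfun γ (bca a ω' (ω' 0))|
        + |gfun γ (bca a ω a) - gfun γ (bca a ω' a)| := abs_sub _ _
    _ ≤ 2 * vvar (gfun γ) m := by linarith

lemma birk_window (hNN : NonNull γ) {B : ℝ} (hB : ∀ ω : Conf E, |gfun γ ω| ≤ B) (a : E)
    (n : ℕ) {ω ω' : Conf E} (h : ∀ j : ℤ, 0 ≤ j → j < (n : ℤ) → ω j = ω' j) :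
    |birk (phiOf γ a) n ω - birk (phiOf γ a) n ω'|
      ≤ 2 * ∑ j ∈ Finset.range n, vvar (gfun γ) j := by
  unfold birk
  rw [← Finset.sum_sub_distrib]
  calc |∑ k ∈ Finset.range n, (phiOf γ a (shiftZ (k : ℤ) ω) - phiOf γ a (shiftZ (k : ℤ) ω'))|
      ≤ ∑ k ∈ Finset.range n, |phiOf γ a (shiftZ (k : ℤ) ω) - phiOf γ a (shiftZ (k : ℤ) ω')| :=
        Finset.abs_sum_le_sum_abs _ _
    _ ≤ ∑ k ∈ Finset.range n, 2 * vvar (gfun γ) (n - 1 - k) := by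
        refine Finset.sum_le_sum fun k hk => ?_
        rw [Finset.mem_range] at hk
        refine phi_window hNN hB a (n - 1 - k) ?_
        intro j hj0 hjm
        show ω (j + k) = ω' (j + k)
        exact h (j + k) (by omega) (by omega)
    _ = 2 * ∑ j ∈ Finset.range n, vvar (gfun γ) j := by
        rw [Finset.sum_range_reflect (fun j => 2 * vvar (gfun γ) j) n, Finset.mul_sum]

lemma vvar_min_le {g : Conf E → ℝ} {B : ℝ} (hB : ∀ ω, |g ω| ≤ B) (k m : ℕ) :
    vvar g (min k m) ≤ vvar g k + vvar g m := by
  rcases min_choice k m with h | h <;> rw [h]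
  · linarith [vvar_nonneg hB m]
  · linarith [vvar_nonneg hB k]

set_option maxHeartbeats 2000000 in
lemma telescope_master (hS : IsSpecification γ) (hNN : NonNull γ) (hTI : SpecTI γ)
    {B : ℝ} (hB : ∀ ω : Conf E, |gfun γ ω| ≤ B) (a : E) (n : ℕ)
    (ζ : {k // k ∈ Lam n} → E) (η : Conf E) :
    |Real.log (γ (Lam n) (ovr (Lam n) ζ η))
      - Real.log (γ (Lam n) (interpC a n ζ η (n : ℤ)))
      - birk (phiOf γ a) n (ovr (Lam n) ζ (fun _ => a))|
      ≤ 4 * ∑ j ∈ Finset.range n, vvar (gfun γ) j := by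
  classical
  set g := gfun γ with hg
  set φ := phiOf γ a with hφ
  set ξ : Conf E := ovr (Lam n) ζ (fun _ => a) with hξ
  set F : ℕ → ℝ := fun k => Real.log (γ (Lam n) (interpC a n ζ η (k : ℤ))) with hF
  have hstep0 : interpC a n ζ η ((0 : ℕ) : ℤ) = ovr (Lam n) ζ η := by
    funext j
    by_cases hj : j ∈ (Lam n)
    · have hnlt : ¬(j < ((0:ℕ) : ℤ)) := by
        have := (mem_Lam.1 hj).1; omega
      simp only [interpC, dif_pos hj, if_neg hnlt, ovr]
    · simp only [interpC, dif_neg hj, ovr]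
  -- single-step identity
  have hkey : ∀ k ∈ Finset.range n, F k - F (k + 1)
      = g (shiftZ (k : ℤ) (interpC a n ζ η (k : ℤ)))
        - g (shiftZ (k : ℤ) (interpC a n ζ η ((k : ℤ) + 1))) := by
    intro k hk
    rw [Finset.mem_range] at hk
    have hsub : ({(k : ℤ)} : Finset ℤ) ⊆ (Lam n) := by
      intro x hx
      rw [Finset.mem_singleton] at hx
      subst hx
      exact mem_Lam.2 ⟨Int.ofNat_nonneg _, by exact_mod_cast hk⟩
    have hagree : ∀ j : ℤ, j ∉ ({(k : ℤ)} : Finset ℤ) →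
        interpC a n ζ η (k : ℤ) j = interpC a n ζ η ((k : ℤ) + 1) j := by
      intro j hj
      rw [Finset.mem_singleton] at hj
      by_cases hjΛ : j ∈ (Lam n)
      · have : (j < (k : ℤ)) ↔ (j < (k : ℤ) + 1) := by omega
        simp only [interpC, dif_pos hjΛ]
        by_cases h1 : j < (k : ℤ)
        · rw [if_pos h1, if_pos (by omega)]
        · rw [if_neg h1, if_neg (by omega)]
      · simp only [interpC, dif_neg hjΛ]
    have hr := gamma_ratio hS hsub hagree
    have p1 : 0 < γ (Lam n) (interpC a n ζ η (k : ℤ)) := gamma_pos hNN _ _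
    have p2 : 0 < γ (Lam n) (interpC a n ζ η ((k : ℤ) + 1)) := gamma_pos hNN _ _
    have p3 : 0 < γ ({(k : ℤ)} : Finset ℤ) (interpC a n ζ η (k : ℤ)) := gamma_pos hNN _ _
    have p4 : 0 < γ ({(k : ℤ)} : Finset ℤ) (interpC a n ζ η ((k : ℤ) + 1)) := gamma_pos hNN _ _
    have hlog : Real.log (γ (Lam n) (interpC a n ζ η (k : ℤ)))
        + Real.log (γ ({(k : ℤ)} : Finset ℤ) (interpC a n ζ η ((k : ℤ) + 1)))
        = Real.log (γ (Lam n) (interpC a n ζ η ((k : ℤ) + 1)))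
        + Real.log (γ ({(k : ℤ)} : Finset ℤ) (interpC a n ζ η (k : ℤ))) := by
      rw [← Real.log_mul (ne_of_gt p1) (ne_of_gt p4), ← Real.log_mul (ne_of_gt p2) (ne_of_gt p3),
        hr]
    have hshift1 : γ ({(k : ℤ)} : Finset ℤ) (interpC a n ζ η (k : ℤ))
        = γ ({0} : Finset ℤ) (shiftZ (k : ℤ) (interpC a n ζ η (k : ℤ))) :=
      gamma_singleton_shift hTI k _
    have hshift2 : γ ({(k : ℤ)} : Finset ℤ) (interpC a n ζ η ((k : ℤ) + 1))
        = γ ({0} : Finset ℤ) (shiftZ (k : ℤ) (interpC a n ζ η ((k : ℤ) + 1))) :=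
      gamma_singleton_shift hTI k _
    have hcast : (((k + 1 : ℕ)) : ℤ) = (k : ℤ) + 1 := by push_cast; ring
    simp only [hF, hcast]
    simp only [hg, gfun]
    rw [← hshift1, ← hshift2]
    linarith
  -- comparison with the potential
  have hcmp : ∀ k ∈ Finset.range n,
      |g (shiftZ (k : ℤ) (interpC a n ζ η (k : ℤ)))
        - g (shiftZ (k : ℤ) (interpC a n ζ η ((k : ℤ) + 1)))
        - φ (shiftZ (k : ℤ) ξ)|
      ≤ 2 * (vvar g k + vvar g (n - 1 - k)) := by
    intro k hk
    rw [Finset.mem_range] at hk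
    set m := min k (n - 1 - k) with hm
    have hm1 : m ≤ k := min_le_left _ _
    have hm2 : m ≤ n - 1 - k := min_le_right _ _
    clear_value m
    set σ := shiftZ (k : ℤ) ξ with hσ
    have hA1 : ∀ j : ℤ, |j| ≤ (m : ℤ) →
        (shiftZ (k : ℤ) (interpC a n ζ η (k : ℤ))) j = bca a σ (σ 0) j := by
      intro j hj
      rw [abs_le] at hj
      have hjk : 0 ≤ j + k ∧ j + k < (n : ℤ) := by
        constructor <;> omega
      have hmem : (j + k) ∈ (Lam n) := mem_Lam.2 hjk
      show interpC a n ζ η (k : ℤ) (j + k) = bca a σ (σ 0) j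
      have hσval : ∀ (i : ℤ) (h1 : 0 ≤ i + k) (h2 : i + k < (n : ℤ)),
          σ i = ζ ⟨i + k, mem_Lam.2 ⟨h1, h2⟩⟩ := by
        intro i h1 h2
        show ξ (i + k) = _
        simp only [hξ, ovr, dif_pos (mem_Lam.2 ⟨h1, h2⟩ : (i + k) ∈ Lam n)]
      simp only [interpC, dif_pos hmem]
      by_cases hneg : j < 0
      · rw [if_pos (by omega)]
        show a = bca a σ (σ 0) j
        simp [bca, hneg]
      · rw [if_neg (by omega)]
        show ζ ⟨j + k, hmem⟩ = bca a σ (σ 0) j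
        by_cases hj0 : j = 0
        · subst hj0
          have hb : bca a σ (σ 0) 0 = σ 0 := by simp [bca]
          rw [hb, hσval 0 (by omega) (by omega)]
        · simp only [bca, if_neg hneg, if_neg hj0]
          rw [hσval j (by omega) (by omega)]
    have hA2 : ∀ j : ℤ, |j| ≤ (m : ℤ) →
        (shiftZ (k : ℤ) (interpC a n ζ η ((k : ℤ) + 1))) j = bca a σ a j := by
      intro j hj
      rw [abs_le] at hj
      have hmem : (j + k) ∈ (Lam n) := mem_Lam.2 ⟨by omega, by omega⟩
      show interpC a n ζ η ((k : ℤ) + 1) (j + k) = bca a σ a j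
      have hσval : ∀ (i : ℤ) (h1 : 0 ≤ i + k) (h2 : i + k < (n : ℤ)),
          σ i = ζ ⟨i + k, mem_Lam.2 ⟨h1, h2⟩⟩ := by
        intro i h1 h2
        show ξ (i + k) = _
        simp only [hξ, ovr, dif_pos (mem_Lam.2 ⟨h1, h2⟩ : (i + k) ∈ Lam n)]
      simp only [interpC, dif_pos hmem]
      by_cases hpos : 0 < j
      · rw [if_neg (by omega)]
        show ζ ⟨j + k, hmem⟩ = bca a σ a j
        simp only [bca, if_neg (by omega : ¬j < 0), if_neg (by omega : ¬j = 0)]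
        rw [hσval j (by omega) (by omega)]
      · rw [if_pos (by omega)]
        show a = bca a σ a j
        by_cases hj0 : j = 0
        · subst hj0; simp [bca]
        · simp [bca, show j < 0 by omega]
    have e1 : |g (shiftZ (k : ℤ) (interpC a n ζ η (k : ℤ))) - g (bca a σ (σ 0))| ≤ vvar g m :=
      le_vvar hB m hA1
    have e2 : |g (shiftZ (k : ℤ) (interpC a n ζ η ((k : ℤ) + 1))) - g (bca a σ a)| ≤ vvar g m :=
      le_vvar hB m hA2
    have hφk : φ (shiftZ (k : ℤ) ξ) = g (bca a σ (σ 0)) - g (bca a σ a) := by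
      rw [hφ, phi_eq hNN, hσ]
    have hmin : vvar g m ≤ vvar g k + vvar g (n - 1 - k) := by
      rw [hm]; exact vvar_min_le hB k (n - 1 - k)
    rw [hφk]
    calc |g (shiftZ (k : ℤ) (interpC a n ζ η (k : ℤ)))
          - g (shiftZ (k : ℤ) (interpC a n ζ η ((k : ℤ) + 1)))
          - (g (bca a σ (σ 0)) - g (bca a σ a))|
        = |(g (shiftZ (k : ℤ) (interpC a n ζ η (k : ℤ))) - g (bca a σ (σ 0)))
          - (g (shiftZ (k : ℤ) (interpC a n ζ η ((k : ℤ) + 1))) - g (bca a σ a))| := by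
          ring_nf
      _ ≤ |g (shiftZ (k : ℤ) (interpC a n ζ η (k : ℤ))) - g (bca a σ (σ 0))|
          + |g (shiftZ (k : ℤ) (interpC a n ζ η ((k : ℤ) + 1))) - g (bca a σ a)| := abs_sub _ _
      _ ≤ 2 * (vvar g k + vvar g (n - 1 - k)) := by linarith
  -- put everything together
  have htel : F 0 - F n = ∑ k ∈ Finset.range n, (F k - F (k + 1)) :=
    (Finset.sum_range_sub' F n).symm
  have hbirk : birk φ n ξ = ∑ k ∈ Finset.range n, φ (shiftZ (k : ℤ) ξ) := rfl
  have hF0 : F 0 = Real.log (γ (Lam n) (ovr (Lam n) ζ η)) := by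
    simp only [hF]
    rw [show ((0 : ℕ) : ℤ) = (0 : ℤ) from rfl]
    rw [show interpC a n ζ η (0 : ℤ) = ovr (Lam n) ζ η from hstep0]
  have key : |F 0 - F n - birk φ n ξ| ≤ 4 * ∑ j ∈ Finset.range n, vvar g j := by
    rw [htel, hbirk, ← Finset.sum_sub_distrib]
    calc |∑ k ∈ Finset.range n, (F k - F (k + 1) - φ (shiftZ (k : ℤ) ξ))|
        ≤ ∑ k ∈ Finset.range n, |F k - F (k + 1) - φ (shiftZ (k : ℤ) ξ)| :=
          Finset.abs_sum_le_sum_abs _ _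
      _ ≤ ∑ k ∈ Finset.range n, 2 * (vvar g k + vvar g (n - 1 - k)) := by
          refine Finset.sum_le_sum fun k hk => ?_
          rw [hkey k hk]
          exact hcmp k hk
      _ = 4 * ∑ j ∈ Finset.range n, vvar g j := by
          rw [Finset.sum_congr rfl (fun k _ => by ring :
            ∀ k ∈ Finset.range n, 2 * (vvar g k + vvar g (n - 1 - k))
              = 2 * vvar g k + 2 * vvar g (n - 1 - k))]
          rw [Finset.sum_add_distrib,
            Finset.sum_range_reflect (fun j => 2 * vvar g j) n]
          rw [← Finset.sum_add_distrib]
          rw [Finset.sum_congr rfl (fun k _ => by ring :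
            ∀ k ∈ Finset.range n, 2 * vvar g k + 2 * vvar g k = 4 * vvar g k)]
          rw [Finset.mul_sum]
  rw [← hF0]
  exact key

lemma interpC_top (a : E) (n : ℕ) (ζ ζ' : {k // k ∈ Lam n} → E) (η : Conf E) :
    interpC a n ζ η (n : ℤ) = interpC a n ζ' η (n : ℤ) := by
  funext j
  by_cases hj : j ∈ Lam n
  · have : j < (n : ℤ) := (mem_Lam.1 hj).2
    simp only [interpC, dif_pos hj, if_pos this]
  · simp only [interpC, dif_neg hj]

set_option maxHeartbeats 1000000 in
/-- The two-sided uniform (in the boundary condition) Gibbs-type bound. -/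
lemma gamma_ovr_bounds (hS : IsSpecification γ) (hNN : NonNull γ) (hTI : SpecTI γ)
    {B : ℝ} (hB : ∀ ω : Conf E, |gfun γ ω| ≤ B) (a : E) (n : ℕ)
    (ζ : {k // k ∈ Lam n} → E) (η : Conf E) :
    Real.exp (birk (phiOf γ a) n (ovr (Lam n) ζ (fun _ => a))
        - 8 * ∑ j ∈ Finset.range n, vvar (gfun γ) j)
      / (∑ ζ' : {k // k ∈ Lam n} → E,
          Real.exp (birk (phiOf γ a) n (ovr (Lam n) ζ' (fun _ => a))))
      ≤ γ (Lam n) (ovr (Lam n) ζ η)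
    ∧ γ (Lam n) (ovr (Lam n) ζ η)
      ≤ Real.exp (birk (phiOf γ a) n (ovr (Lam n) ζ (fun _ => a))
          + 8 * ∑ j ∈ Finset.range n, vvar (gfun γ) j)
        / (∑ ζ' : {k // k ∈ Lam n} → E,
            Real.exp (birk (phiOf γ a) n (ovr (Lam n) ζ' (fun _ => a)))) := by
  classical
  set V : ℝ := ∑ j ∈ Finset.range n, vvar (gfun γ) j with hV
  set b : ({k // k ∈ Lam n} → E) → ℝ :=
    fun ζ' => birk (phiOf γ a) n (ovr (Lam n) ζ' (fun _ => a)) with hb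
  set A : ℝ := γ (Lam n) (interpC a n ζ η (n : ℤ)) with hA
  have hApos : 0 < A := gamma_pos hNN _ _
  set Z' : ℝ := ∑ ζ' : {k // k ∈ Lam n} → E, Real.exp (b ζ') with hZ'
  have hZpos : 0 < Z' :=
    Finset.sum_pos (fun ζ' _ => Real.exp_pos _) Finset.univ_nonempty
  -- uniform two-sided pointwise bounds from the telescope
  have hbd : ∀ ζ' : {k // k ∈ Lam n} → E,
      A * Real.exp (b ζ' - 4 * V) ≤ γ (Lam n) (ovr (Lam n) ζ' η) ∧
      γ (Lam n) (ovr (Lam n) ζ' η) ≤ A * Real.exp (b ζ' + 4 * V) := by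
    intro ζ'
    have hmaster := telescope_master hS hNN hTI hB a n ζ' η
    rw [interpC_top a n ζ' ζ η] at hmaster
    rw [abs_le] at hmaster
    have hγpos : 0 < γ (Lam n) (ovr (Lam n) ζ' η) := gamma_pos hNN _ _
    constructor
    · have h1 : Real.log A + (b ζ' - 4 * V) ≤ Real.log (γ (Lam n) (ovr (Lam n) ζ' η)) := by
        have := hmaster.1; simp only [← hA, ← hb, ← hV] at this ⊢; linarith
      calc A * Real.exp (b ζ' - 4 * V) = Real.exp (Real.log A + (b ζ' - 4 * V)) := by
            rw [Real.exp_add, Real.exp_log hApos]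
        _ ≤ Real.exp (Real.log (γ (Lam n) (ovr (Lam n) ζ' η))) := Real.exp_le_exp.2 h1
        _ = γ (Lam n) (ovr (Lam n) ζ' η) := Real.exp_log hγpos
    · have h1 : Real.log (γ (Lam n) (ovr (Lam n) ζ' η)) ≤ Real.log A + (b ζ' + 4 * V) := by
        have := hmaster.2; simp only [← hA, ← hb, ← hV] at this ⊢; linarith
      calc γ (Lam n) (ovr (Lam n) ζ' η)
            = Real.exp (Real.log (γ (Lam n) (ovr (Lam n) ζ' η))) := (Real.exp_log hγpos).symm
        _ ≤ Real.exp (Real.log A + (b ζ' + 4 * V)) := Real.exp_le_exp.2 h1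
        _ = A * Real.exp (b ζ' + 4 * V) := by rw [Real.exp_add, Real.exp_log hApos]
  have hsum1 : (∑ ζ' : {k // k ∈ Lam n} → E, γ (Lam n) (ovr (Lam n) ζ' η)) = 1 := hS.2.1 _ _
  -- bounds on A
  have hAle : A ≤ Real.exp (4 * V) / Z' := by
    have hle : A * Real.exp (-(4 * V)) * Z' ≤ 1 := by
      have hterm : ∀ ζ' : {k // k ∈ Lam n} → E,
          A * Real.exp (-(4 * V)) * Real.exp (b ζ') = A * Real.exp (b ζ' - 4 * V) := by
        intro ζ'
        rw [mul_assoc, ← Real.exp_add]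
        congr 2
        ring
      calc A * Real.exp (-(4 * V)) * Z'
          = ∑ ζ' : {k // k ∈ Lam n} → E, A * Real.exp (-(4 * V)) * Real.exp (b ζ') :=
            Finset.mul_sum _ _ _
        _ = ∑ ζ' : {k // k ∈ Lam n} → E, A * Real.exp (b ζ' - 4 * V) :=
            Finset.sum_congr rfl fun ζ' _ => hterm ζ'
        _ ≤ ∑ ζ' : {k // k ∈ Lam n} → E, γ (Lam n) (ovr (Lam n) ζ' η) :=
            Finset.sum_le_sum fun ζ' _ => (hbd ζ').1
        _ = 1 := hsum1
    rw [le_div_iff₀ hZpos]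
    have he : (0:ℝ) < Real.exp (-(4 * V)) := Real.exp_pos _
    have : A * Z' * Real.exp (-(4 * V)) ≤ 1 := by linarith [hle, mul_comm A (Real.exp (-(4*V)))]
    have h2 : A * Z' ≤ 1 / Real.exp (-(4 * V)) := by
      rw [le_div_iff₀ he]
      calc A * Z' * Real.exp (-(4 * V)) = A * Real.exp (-(4 * V)) * Z' := by ring
        _ ≤ 1 := hle
    calc A * Z' ≤ 1 / Real.exp (-(4 * V)) := h2
      _ = Real.exp (4 * V) := by rw [one_div, ← Real.exp_neg]; ring_nf
  have hAge : Real.exp (-(4 * V)) / Z' ≤ A := by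
    have hge : 1 ≤ A * Real.exp (4 * V) * Z' := by
      have hterm : ∀ ζ' : {k // k ∈ Lam n} → E,
          A * Real.exp (b ζ' + 4 * V) = A * Real.exp (4 * V) * Real.exp (b ζ') := by
        intro ζ'
        rw [mul_assoc, ← Real.exp_add]
        congr 2
        ring
      calc (1:ℝ) = ∑ ζ' : {k // k ∈ Lam n} → E, γ (Lam n) (ovr (Lam n) ζ' η) := hsum1.symm
        _ ≤ ∑ ζ' : {k // k ∈ Lam n} → E, A * Real.exp (b ζ' + 4 * V) :=
            Finset.sum_le_sum fun ζ' _ => (hbd ζ').2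
        _ = ∑ ζ' : {k // k ∈ Lam n} → E, A * Real.exp (4 * V) * Real.exp (b ζ') :=
            Finset.sum_congr rfl fun ζ' _ => hterm ζ'
        _ = A * Real.exp (4 * V) * Z' := (Finset.mul_sum _ _ _).symm
    rw [div_le_iff₀ hZpos]
    have he : (0:ℝ) < Real.exp (4 * V) := Real.exp_pos _
    have key : 1 ≤ A * Z' * Real.exp (4 * V) := by
      calc (1:ℝ) ≤ A * Real.exp (4 * V) * Z' := hge
        _ = A * Z' * Real.exp (4 * V) := by ring
    have h2 : 1 / Real.exp (4 * V) ≤ A * Z' := by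
      rw [div_le_iff₀ he]
      linarith
    calc Real.exp (-(4 * V)) = 1 / Real.exp (4 * V) := by
          rw [Real.exp_neg, one_div]
      _ ≤ A * Z' := h2
  have final1 : Real.exp (b ζ - 8 * V) / Z' ≤ γ (Lam n) (ovr (Lam n) ζ η) := by
    have heq : Real.exp (b ζ - 8 * V) / Z'
        = (Real.exp (-(4 * V)) / Z') * Real.exp (b ζ - 4 * V) := by
      rw [div_mul_eq_mul_div, ← Real.exp_add]
      congr 2
      ring
    rw [heq]
    calc (Real.exp (-(4 * V)) / Z') * Real.exp (b ζ - 4 * V)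
        ≤ A * Real.exp (b ζ - 4 * V) :=
          mul_le_mul_of_nonneg_right hAge (Real.exp_pos _).le
      _ ≤ γ (Lam n) (ovr (Lam n) ζ η) := (hbd ζ).1
  have final2 : γ (Lam n) (ovr (Lam n) ζ η) ≤ Real.exp (b ζ + 8 * V) / Z' := by
    have heq : Real.exp (b ζ + 8 * V) / Z'
        = (Real.exp (4 * V) / Z') * Real.exp (b ζ + 4 * V) := by
      rw [div_mul_eq_mul_div, ← Real.exp_add]
      congr 2
      ring
    rw [heq]
    calc γ (Lam n) (ovr (Lam n) ζ η) ≤ A * Real.exp (b ζ + 4 * V) := (hbd ζ).2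
      _ ≤ (Real.exp (4 * V) / Z') * Real.exp (b ζ + 4 * V) :=
          mul_le_mul_of_nonneg_right hAle (Real.exp_pos _).le
  exact ⟨final1, final2⟩

/-- Index equivalence between `Fin n` and the window `Lam n`. -/
def eIdx (n : ℕ) : Fin n ≃ {k : ℤ // k ∈ Lam n} where
  toFun j := ⟨((j : ℕ) : ℤ), mem_Lam.2 ⟨Int.ofNat_nonneg _, by exact_mod_cast j.2⟩⟩
  invFun s := ⟨s.1.toNat, by have := mem_Lam.1 s.2; omega⟩
  left_inv j := by
    ext
    simp
  right_inv s := by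
    ext
    have := mem_Lam.1 s.2
    simp
    omega

lemma ovr_eIdx_eq_wordCfg (a : E) {n : ℕ} (w : Fin n → E) :
    ovr (Lam n) (fun s => w ((eIdx n).symm s)) (fun _ => a) = wordCfg a w := by
  funext j
  by_cases hj : j ∈ Lam n
  · have h2 := mem_Lam.1 hj
    simp only [ovr, dif_pos hj, wordCfg, dif_pos (⟨h2.1, h2.2⟩ : (0:ℤ) ≤ j ∧ j < (n:ℤ))]
    rfl
  · have h2 : ¬((0:ℤ) ≤ j ∧ j < (n:ℤ)) := fun hc => hj (mem_Lam.2 hc)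
    simp only [ovr, dif_neg hj, wordCfg, dif_neg h2]

lemma Z_between (hNN : NonNull γ) {B : ℝ} (hB : ∀ ω : Conf E, |gfun γ ω| ≤ B) (a : E) (n : ℕ) :
    (∑ ζ' : {k // k ∈ Lam n} → E,
        Real.exp (birk (phiOf γ a) n (ovr (Lam n) ζ' (fun _ => a))))
      ≤ (∑ w : Fin n → E, tW (phiOf γ a) w)
    ∧ (∑ w : Fin n → E, tW (phiOf γ a) w)
      ≤ Real.exp (2 * ∑ j ∈ Finset.range n, vvar (gfun γ) j)
        * ∑ ζ' : {k // k ∈ Lam n} → E,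
            Real.exp (birk (phiOf γ a) n (ovr (Lam n) ζ' (fun _ => a))) := by
  classical
  have hM : ∀ ω : Conf E, |phiOf γ a ω| ≤ 2 * B := abs_phi_le hNN hB a
  set φ := phiOf γ a with hφ
  set V : ℝ := ∑ j ∈ Finset.range n, vvar (gfun γ) j with hV
  set Econv : (Fin n → E) ≃ ({k // k ∈ Lam n} → E) :=
    Equiv.arrowCongr (eIdx n) (Equiv.refl E) with hE
  have hconv : ∀ w : Fin n → E,
      ovr (Lam n) (Econv w) (fun _ => a) = wordCfg a w := by
    intro w
    have : Econv w = fun s => w ((eIdx n).symm s) := rfl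
    rw [this]
    exact ovr_eIdx_eq_wordCfg a w
  have hsum : (∑ ζ' : {k // k ∈ Lam n} → E, Real.exp (birk φ n (ovr (Lam n) ζ' (fun _ => a))))
      = ∑ w : Fin n → E, Real.exp (birk φ n (wordCfg a w)) := by
    rw [← Equiv.sum_comp Econv
      (fun ζ' => Real.exp (birk φ n (ovr (Lam n) ζ' (fun _ => a))))]
    exact Finset.sum_congr rfl fun w _ => by rw [hconv w]
  have hlow : ∀ w : Fin n → E, Real.exp (birk φ n (wordCfg a w)) ≤ tW φ w :=
    fun w => le_tW hM (wordCfg_mem_cylW a w)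
  have hup : ∀ w : Fin n → E,
      tW φ w ≤ Real.exp (2 * V) * Real.exp (birk φ n (wordCfg a w)) := by
    intro w
    refine tW_le hM w ?_
    intro ω' hω'
    have hagree : ∀ j : ℤ, 0 ≤ j → j < (n : ℤ) → ω' j = wordCfg a w j := by
      intro j hj0 hjn
      have hfin : (j.toNat) < n := by omega
      have h := hω' ⟨j.toNat, hfin⟩
      have hcast : ((j.toNat : ℕ) : ℤ) = j := Int.toNat_of_nonneg hj0
      rw [hcast] at h
      rw [h]
      simp only [wordCfg, dif_pos (⟨hj0, hjn⟩ : (0:ℤ) ≤ j ∧ j < (n:ℤ))]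
    have hw := birk_window hNN hB a n hagree
    rw [abs_le] at hw
    rw [← Real.exp_add]
    refine Real.exp_le_exp.2 ?_
    rw [← hφ] at *
    simp only [← hV] at hw
    linarith [hw.1]
  constructor
  · rw [hsum]
    exact Finset.sum_le_sum fun w _ => hlow w
  · rw [hsum, Finset.mul_sum]
    exact Finset.sum_le_sum fun w _ => hup w

lemma integral_between [TopologicalSpace E] [DiscreteTopology E]
    [MeasurableSpace E] [MeasurableSingletonClass E]
    {μ : Measure (Conf E)} [IsProbabilityMeasure μ] {G : Conf E → ℝ} (hG : Continuous G)
    {L U : ℝ} (hL : ∀ η, L ≤ G η) (hU : ∀ η, G η ≤ U) :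
    L ≤ ∫ η, G η ∂μ ∧ ∫ η, G η ∂μ ≤ U := by
  haveI : BorelSpace E := borelE
  have hmeas : AEStronglyMeasurable G μ := hG.aestronglyMeasurable
  have hint : Integrable G μ := by
    refine (integrable_const (|L| + |U|)).mono' hmeas (Filter.Eventually.of_forall fun x => ?_)
    rw [Real.norm_eq_abs, abs_le]
    constructor
    · have h1 := hL x; have h2 := neg_abs_le L; have h3 := abs_nonneg U; linarith
    · have h1 := hU x; have h2 := le_abs_self U; have h3 := abs_nonneg L; linarith
  constructor
  · calc L = ∫ _, L ∂μ := by simp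
      _ ≤ ∫ η, G η ∂μ := integral_mono (integrable_const L) hint hL
  · calc ∫ η, G η ∂μ ≤ ∫ _, U ∂μ := integral_mono hint (integrable_const U) hU
      _ = U := by simp

end Core

end Aux15

/-- Every shift-invariant DLR-Gibbs measure `μ ∈ G_S(γ)` for a
translation-invariant Gibbsian specification `γ` is weak Bowen-Gibbs with respect to the
associated potential `φ_γ`, with constant `P = P(φ_γ)`. -/
theorem gibbs_weakBowenGibbs [Fintype E] [Nonempty E] [TopologicalSpace E] [DiscreteTopology E]
    [MeasurableSpace E] [MeasurableSingletonClass E]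
    (γ : Finset ℤ → Conf E → ℝ) (hγ : IsGibbsSpec γ) (hTI : SpecTI γ) (a : E)
    (μ : Measure (Conf E)) (hμ : IsDLRGibbs γ μ) (hinv : ShiftInv μ) :
    WeakBowenGibbs μ (phiOf γ a) (press (phiOf γ a)) := by
  classical
  obtain ⟨hS, hNN, hCont⟩ := hγ
  haveI : IsProbabilityMeasure μ := hμ.1
  obtain ⟨B, hB0, hB⟩ := abs_g_le hS hNN
  have hgc : Continuous (gfun γ) :=
    (hCont ({0} : Finset ℤ)).log fun ω => ne_of_gt (gamma_pos hNN _ _)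
  set φ := phiOf γ a with hφ
  have hM : ∀ ω : Conf E, |φ ω| ≤ 2 * B := abs_phi_le hNN hB a
  set P := press φ with hP
  set Vn : ℕ → ℝ := fun n => ∑ j ∈ Finset.range n, vvar (gfun γ) j with hVn
  set uq : ℕ → ℝ := fun n => Real.log (∑ w : Fin n → E, tW φ w) with huq
  have htend : Tendsto (fun n : ℕ => uq n / n) atTop (𝓝 P) := useq_tendsto_press hM
  have hves : Tendsto (vvar (gfun γ)) atTop (𝓝 0) := vvar_tendsto hB hgc
  have hcesaro : Tendsto (fun n : ℕ => Vn n / n) atTop (𝓝 0) := by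
    refine hves.cesaro.congr fun n => ?_
    exact (div_eq_inv_mul _ _).symm
  have hV0 : ∀ n : ℕ, 0 ≤ Vn n := fun n => Finset.sum_nonneg fun j _ => vvar_nonneg hB j
  refine ⟨fun n => Real.exp (|uq n - n * P| + 12 * Vn n), fun n => Real.exp_pos _, ?_, ?_⟩
  · -- the normalizing constants are subexponential
    have t1 : Tendsto (fun n : ℕ => |uq n / n - P|) atTop (𝓝 0) := by
      have := (htend.sub (tendsto_const_nhds (x := P))).abs
      simpa using this
    have heq : (fun n : ℕ => |uq n / n - P|) =ᶠ[atTop] fun n : ℕ => |uq n - n * P| / n := by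
      filter_upwards [eventually_ge_atTop 1] with n hn
      have hn0 : (0:ℝ) < n := by exact_mod_cast hn
      rw [show uq n / (n:ℝ) - P = (uq n - n * P) / n by field_simp]
      rw [abs_div, abs_of_pos hn0]
    have t1' : Tendsto (fun n : ℕ => |uq n - n * P| / n) atTop (𝓝 0) := t1.congr' heq
    have t2 : Tendsto (fun n : ℕ => 12 * (Vn n / n)) atTop (𝓝 0) := by
      simpa using hcesaro.const_mul (12:ℝ)
    have h0 : Tendsto (fun n : ℕ => |uq n - n * P| / n + 12 * (Vn n / n)) atTop (𝓝 0) := by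
      simpa using t1'.add t2
    refine h0.congr fun n => ?_
    rw [Real.log_exp, add_div, mul_div_assoc]
  · -- the two-sided bounds
    intro n ω
    have hXpos : (0:ℝ) < Real.exp (birk φ n ω - n * P) := Real.exp_pos _
    rcases Nat.eq_zero_or_pos n with rfl | hn
    · have hcyl : cylPt ω 0 = Set.univ := by
        ext x
        simp [cylPt]
      have hμ1 : (μ (cylPt ω 0)).toReal = 1 := by
        rw [hcyl]
        simp
      have hbirk0 : birk φ 0 ω = 0 := by simp [birk]
      have hVn0 : Vn 0 = 0 := by simp [hVn]
      have hCge : (1:ℝ) ≤ Real.exp (|uq 0 - (0:ℕ) * P| + 12 * Vn 0) :=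
        Real.one_le_exp (by positivity)
      rw [hμ1, hbirk0]
      constructor
      · calc (Real.exp (|uq 0 - (0:ℕ) * P| + 12 * Vn 0))⁻¹ ≤ 1 := by
              rw [← Real.exp_neg]
              refine Real.exp_le_one_iff.2 ?_
              simp only [neg_nonpos]
              positivity
          _ ≤ 1 / Real.exp (0 - (0:ℕ) * P) := by
              push_cast
              simp
      · calc (1:ℝ) / Real.exp (0 - (0:ℕ) * P) = 1 := by push_cast; simp
          _ ≤ Real.exp (|uq 0 - (0:ℕ) * P| + 12 * Vn 0) := hCge
    · -- main case n ≥ 1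
      set ζs : {k // k ∈ Lam n} → E := fun s => ω s.1 with hζs
      have hμint := measure_cylPt_eq_integral hCont hμ ω n (Lam n) (fun k => mem_Lam)
      have hGc : Continuous (fun η : Conf E => γ (Lam n) (ovr (Lam n) ζs η)) :=
        (hCont (Lam n)).comp (continuous_ovr _ _)
      have hbnd := fun η : Conf E => gamma_ovr_bounds hS hNN hTI hB a n ζs η
      set bz : ℝ := birk φ n (ovr (Lam n) ζs (fun _ => a)) with hbz
      set Zp : ℝ := ∑ ζ' : {k // k ∈ Lam n} → E,
          Real.exp (birk φ n (ovr (Lam n) ζ' (fun _ => a))) with hZp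
      have hZppos : 0 < Zp :=
        Finset.sum_pos (fun ζ' _ => Real.exp_pos _) Finset.univ_nonempty
      have hint := integral_between (μ := μ) hGc
        (L := Real.exp (bz - 8 * Vn n) / Zp) (U := Real.exp (bz + 8 * Vn n) / Zp)
        (fun η => (hbnd η).1) (fun η => (hbnd η).2)
      rw [hμint] at hint
      obtain ⟨hZ1, hZ2⟩ := Z_between hNN hB a n
      have hZwpos : 0 < ∑ w : Fin n → E, tW φ w := Zseq_pos a hM n
      have hZwexp : (∑ w : Fin n → E, tW φ w) = Real.exp (uq n) := (Real.exp_log hZwpos).symm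
      have hbirkcmp : |bz - birk φ n ω| ≤ 2 * Vn n := by
        refine birk_window hNN hB a n ?_
        intro j hj0 hjn
        have hmem : j ∈ Lam n := mem_Lam.2 ⟨hj0, hjn⟩
        simp only [ovr, dif_pos hmem]
        rfl
      rw [abs_le] at hbirkcmp
      have habs1 : (n:ℝ) * P - uq n ≤ |uq n - n * P| := by
        rw [abs_sub_comm]
        exact le_abs_self _
      have habs2 : uq n - (n:ℝ) * P ≤ |uq n - n * P| := le_abs_self _
      -- upper bound for the measure
      have hTub : (μ (cylPt ω n)).toReal
          ≤ Real.exp ((|uq n - n * P| + 12 * Vn n) + (birk φ n ω - n * P)) := by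
        have s1 : Real.exp (bz + 8 * Vn n) / Zp
            ≤ Real.exp (bz + 8 * Vn n) * Real.exp (2 * Vn n) / (∑ w : Fin n → E, tW φ w) := by
          rw [div_le_div_iff₀ hZppos hZwpos]
          calc Real.exp (bz + 8 * Vn n) * (∑ w : Fin n → E, tW φ w)
              ≤ Real.exp (bz + 8 * Vn n) * (Real.exp (2 * Vn n) * Zp) :=
                mul_le_mul_of_nonneg_left hZ2 (Real.exp_pos _).le
            _ = Real.exp (bz + 8 * Vn n) * Real.exp (2 * Vn n) * Zp := by ring
        have s2 : Real.exp (bz + 8 * Vn n) * Real.exp (2 * Vn n) / (∑ w : Fin n → E, tW φ w)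
            = Real.exp (bz + 10 * Vn n - uq n) := by
          rw [hZwexp, ← Real.exp_add, ← Real.exp_sub]
          congr 1
          ring
        have s3 : Real.exp (bz + 10 * Vn n - uq n)
            ≤ Real.exp ((|uq n - n * P| + 12 * Vn n) + (birk φ n ω - n * P)) := by
          refine Real.exp_le_exp.2 ?_
          have := hbirkcmp.2
          linarith
        calc (μ (cylPt ω n)).toReal ≤ Real.exp (bz + 8 * Vn n) / Zp := hint.2
          _ ≤ Real.exp (bz + 8 * Vn n) * Real.exp (2 * Vn n) / (∑ w : Fin n → E, tW φ w) := s1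
          _ = Real.exp (bz + 10 * Vn n - uq n) := s2
          _ ≤ _ := s3
      -- lower bound for the measure
      have hTlb : Real.exp ((birk φ n ω - n * P) - (|uq n - n * P| + 12 * Vn n))
          ≤ (μ (cylPt ω n)).toReal := by
        have s1 : Real.exp (bz - 8 * Vn n) / (∑ w : Fin n → E, tW φ w)
            ≤ Real.exp (bz - 8 * Vn n) / Zp := by
          refine div_le_div_of_nonneg_left (Real.exp_pos _).le hZppos hZ1
        have s2 : Real.exp (bz - 8 * Vn n) / (∑ w : Fin n → E, tW φ w)
            = Real.exp (bz - 8 * Vn n - uq n) := by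
          rw [hZwexp, ← Real.exp_sub]
        have s3 : Real.exp ((birk φ n ω - n * P) - (|uq n - n * P| + 12 * Vn n))
            ≤ Real.exp (bz - 8 * Vn n - uq n) := by
          refine Real.exp_le_exp.2 ?_
          have := hbirkcmp.1
          have := hV0 n
          linarith
        calc Real.exp ((birk φ n ω - n * P) - (|uq n - n * P| + 12 * Vn n))
            ≤ Real.exp (bz - 8 * Vn n - uq n) := s3
          _ = Real.exp (bz - 8 * Vn n) / (∑ w : Fin n → E, tW φ w) := s2.symm
          _ ≤ Real.exp (bz - 8 * Vn n) / Zp := s1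
          _ ≤ (μ (cylPt ω n)).toReal := hint.1
      constructor
      · rw [le_div_iff₀ hXpos, ← Real.exp_neg, ← Real.exp_add]
        refine le_trans (Real.exp_le_exp.2 (le_of_eq ?_)) hTlb
        ring
      · rw [div_le_iff₀ hXpos, ← Real.exp_add]
        exact hTub

end GP
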